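/- For all x ∈ ℂ and τ ∈ ℂ with Im τ > 0, one has θ(x, τ)·θ_{0,1/2}(x, τ) = θ_{0,1/2}(2x, 2τ)·θ_{0,1/2}(0, 2τ). -/

import Mathlib

open Complex

/-- The Jacobi theta function `θ(x, τ) = ∑_{m ∈ ℤ} exp(πiτm² + 2πimx)`. -/
noncomputable def theta (x τ : ℂ) : ℂ :=
  ∑' m : ℤ, Complex.exp (Real.pi * Complex.I * τ * (m : ℂ) ^ 2
    + 2 * Real.pi * Complex.I * (m : ℂ) * x)

/-- The theta function with real characteristics `(a, b)`:
`θ_{a,b}(x, τ) = ∑_{m ∈ ℤ} exp(πiτ(m+a)² + 2πi(m+a)(x+b))`. -/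
noncomputable def thetaChar (a b : ℝ) (x τ : ℂ) : ℂ :=
  ∑' m : ℤ, Complex.exp (Real.pi * Complex.I * τ * ((m : ℂ) + (a : ℂ)) ^ 2
    + 2 * Real.pi * Complex.I * ((m : ℂ) + (a : ℂ)) * (x + (b : ℂ)))

/-- Generic theta-series term. -/
noncomputable def Tt (w τ : ℂ) (m : ℤ) : ℂ :=
  Complex.exp (Real.pi * Complex.I * τ * (m : ℂ) ^ 2
    + 2 * Real.pi * Complex.I * (m : ℂ) * w)

lemma summable_Tt (w : ℂ) {τ : ℂ} (hτ : 0 < τ.im) : Summable (Tt w τ) := by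
  refine ((summable_jacobiTheta₂_term_iff w τ).mpr hτ).congr fun m => ?_
  rw [jacobiTheta₂_term, Tt]
  congr 1
  ring

lemma summable_norm_Tt (w : ℂ) {τ : ℂ} (hτ : 0 < τ.im) :
    Summable fun m => ‖Tt w τ m‖ :=
  summable_norm_iff.mpr (summable_Tt w hτ)

/-- Splitting `ℤ × ℤ` by the parity of the sum of coordinates. -/
def myE : Bool × ℤ × ℤ ≃ ℤ × ℤ where
  toFun q := if q.1 then (q.2.1 + q.2.2, q.2.1 - q.2.2) else (q.2.1 + q.2.2 + 1, q.2.1 - q.2.2)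
  invFun p := (decide ((p.1 + p.2) % 2 = 0), ((p.1 + p.2) / 2, (p.1 - p.2) / 2))
  left_inv := by
    rintro ⟨b, r, s⟩
    rcases b <;> simp only [if_true, if_false, Bool.false_eq_true, Prod.mk.injEq] <;>
      refine ⟨by simp [decide_eq_true_iff, decide_eq_false_iff_not]; omega, by omega, by omega⟩
  right_inv := by
    rintro ⟨m, n⟩
    by_cases h : (m + n) % 2 = 0 <;>
      simp only [h, decide_true, decide_false, if_true, if_false, Bool.false_eq_true,
        Prod.mk.injEq] <;> constructor <;> omega

lemma myE_false (p : ℤ × ℤ) : myE (false, p) = (p.1 + p.2 + 1, p.1 - p.2) := rfl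

lemma myE_true (p : ℤ × ℤ) : myE (true, p) = (p.1 + p.2, p.1 - p.2) := rfl

/-- Fixed-point free sign-flipping involution. -/
def myI : ℤ × ℤ ≃ ℤ × ℤ where
  toFun p := (p.1, -p.2 - 1)
  invFun p := (p.1, -p.2 - 1)
  left_inv := by rintro ⟨r, s⟩; simp
  right_inv := by rintro ⟨r, s⟩; simp

lemma myI_apply (p : ℤ × ℤ) : myI p = (p.1, -p.2 - 1) := rfl

/-- Splitting a sum over `ℤ × ℤ` into even and odd parts. -/
lemma sum_split (F : ℤ × ℤ → ℂ) (hFsum : Summable F) :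
    ∑' p : ℤ × ℤ, F p =
      (∑' p : ℤ × ℤ, F (myE (false, p))) + ∑' p : ℤ × ℤ, F (myE (true, p)) := by
  rw [← myE.tsum_eq F]
  have hFE : Summable (fun q : Bool × ℤ × ℤ => F (myE q)) := myE.summable_iff.mpr hFsum
  rw [Summable.tsum_prod' hFE hFE.prod_factor, tsum_bool]

/-- A sum negated by a (necessarily fixed-point free) involution vanishes. -/
lemma sum_zero (h : ℤ × ℤ → ℂ) (hinv : ∀ p, h (myI p) = -h p) : ∑' p, h p = 0 := by
  have hsum : ∑' p, h p = -∑' p, h p := by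
    conv_lhs => rw [← myI.tsum_eq h]
    rw [show (fun p => h (myI p)) = fun p => -h p from funext hinv, tsum_neg]
  have h2 : (2 : ℂ) * ∑' p, h p = 0 := by linear_combination hsum
  simpa using mul_eq_zero.mp h2

lemma key (x : ℂ) {τ : ℂ} (hτ : 0 < τ.im) :
    (∑' m : ℤ, Tt x τ m) * (∑' m : ℤ, Tt (x + 1/2) τ m) =
      (∑' m : ℤ, Tt (2*x + 1/2) (2*τ) m) * (∑' m : ℤ, Tt (1/2) (2*τ) m) := by
  have hτ2 : 0 < (2*τ).im := by simp [Complex.mul_im]; linarith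
  have hFsum : Summable (fun p : ℤ × ℤ => Tt x τ p.1 * Tt (x + 1/2) τ p.2) :=
    summable_mul_of_summable_norm (summable_norm_Tt x hτ) (summable_norm_Tt (x + 1/2) hτ)
  rw [tsum_mul_tsum_of_summable_norm (summable_norm_Tt x hτ) (summable_norm_Tt (x + 1/2) hτ),
    tsum_mul_tsum_of_summable_norm (summable_norm_Tt (2*x + 1/2) hτ2)
      (summable_norm_Tt (1/2) hτ2)]
  rw [sum_split _ hFsum]
  have hodd : ∑' p : ℤ × ℤ,
      (fun p : ℤ × ℤ => Tt x τ p.1 * Tt (x + 1/2) τ p.2) (myE (false, p)) = 0 := by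
    refine sum_zero _ fun p => ?_
    obtain ⟨r, s⟩ := p
    simp only [myI_apply, myE_false]
    have hs : Complex.exp ((s : ℂ) * (2 * (Real.pi : ℂ) * Complex.I)
        + (Real.pi : ℂ) * Complex.I) = -1 := by
      rw [Complex.exp_add, Complex.exp_int_mul_two_pi_mul_I, Complex.exp_pi_mul_I, one_mul]
    have key2 : ∀ a b : ℂ, a = b + ((s : ℂ) * (2 * (Real.pi : ℂ) * Complex.I)
        + (Real.pi : ℂ) * Complex.I) → Complex.exp a = -Complex.exp b := by
      intro a b hab
      rw [hab, Complex.exp_add, hs, mul_neg_one]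
    simp only [Tt, ← Complex.exp_add]
    exact key2 _ _ (by push_cast; ring)
  rw [hodd, zero_add]
  refine tsum_congr fun p => ?_
  obtain ⟨r, s⟩ := p
  simp only [myE_true]
  have hs1 : Complex.exp (((-s : ℤ) : ℂ) * (2 * (Real.pi : ℂ) * Complex.I)) = 1 :=
    Complex.exp_int_mul_two_pi_mul_I (-s)
  have key3 : ∀ a b : ℂ, a = b + ((-s : ℤ) : ℂ) * (2 * (Real.pi : ℂ) * Complex.I) →
      Complex.exp a = Complex.exp b := by
    intro a b hab
    rw [hab, Complex.exp_add, hs1, mul_one]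
  simp only [Tt, ← Complex.exp_add]
  exact key3 _ _ (by push_cast; ring)

theorem stmt_5 (x τ : ℂ) (hτ : 0 < τ.im) :
    theta x τ * thetaChar 0 (1/2) x τ =
      thetaChar 0 (1/2) (2 * x) (2 * τ) * thetaChar 0 (1/2) 0 (2 * τ) := by
  have h1 : theta x τ = ∑' m : ℤ, Tt x τ m := rfl
  have h2 : thetaChar 0 (1/2) x τ = ∑' m : ℤ, Tt (x + 1/2) τ m := by
    refine tsum_congr fun m => ?_
    rw [Tt]; congr 1; push_cast; ring
  have h3 : thetaChar 0 (1/2) (2*x) (2*τ) = ∑' m : ℤ, Tt (2*x + 1/2) (2*τ) m := by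
    refine tsum_congr fun m => ?_
    rw [Tt]; congr 1; push_cast; ring
  have h4 : thetaChar 0 (1/2) 0 (2*τ) = ∑' m : ℤ, Tt (1/2) (2*τ) m := by
    refine tsum_congr fun m => ?_
    rw [Tt]; congr 1; push_cast; ring
  rw [h1, h2, h3, h4, key x hτ]
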